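/- For any i < j < k with j − i ≥ 2 and the twisting maps R_{i,k}, R_{j,k} both equal to flips, the maps R_{i,j}, R_{j,k}, R_{i,k} satisfy the hexagon equation; more generally, if among three twisting maps R₁ : B⊗A→A⊗B, R₂ : C⊗B→B⊗C, R₃ : C⊗A→A⊗C any two are usual flips, then the three are compatible (satisfy the hexagon equation). -/
import Mathlib


open TensorProduct

noncomputable section

/-- First twisting condition: `R∘(id_Y ⊗ m_X) = (m_X ⊗ id_Y)∘(id_X ⊗ R)∘(R ⊗ id_X)`
(with the canonical associators inserted). -/
def TwistCond1 {X Y : Type*} [AddCommGroup X] [Module ℂ X] [AddCommGroup Y] [Module ℂ Y]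
    (mX : X ⊗[ℂ] X →ₗ[ℂ] X) (R : Y ⊗[ℂ] X →ₗ[ℂ] X ⊗[ℂ] Y) : Prop :=
  R ∘ₗ TensorProduct.map LinearMap.id mX
    = TensorProduct.map mX LinearMap.id
        ∘ₗ (TensorProduct.assoc ℂ X X Y).symm.toLinearMap
        ∘ₗ TensorProduct.map LinearMap.id R
        ∘ₗ (TensorProduct.assoc ℂ X Y X).toLinearMap
        ∘ₗ TensorProduct.map R LinearMap.id
        ∘ₗ (TensorProduct.assoc ℂ Y X X).symm.toLinearMap

/-- Second twisting condition: `R∘(m_Y ⊗ id_X) = (id_X ⊗ m_Y)∘(R ⊗ id_Y)∘(id_Y ⊗ R)`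
(with the canonical associators inserted). -/
def TwistCond2 {X Y : Type*} [AddCommGroup X] [Module ℂ X] [AddCommGroup Y] [Module ℂ Y]
    (mY : Y ⊗[ℂ] Y →ₗ[ℂ] Y) (R : Y ⊗[ℂ] X →ₗ[ℂ] X ⊗[ℂ] Y) : Prop :=
  R ∘ₗ TensorProduct.map mY LinearMap.id
    = TensorProduct.map LinearMap.id mY
        ∘ₗ (TensorProduct.assoc ℂ X Y Y).toLinearMap
        ∘ₗ TensorProduct.map R LinearMap.id
        ∘ₗ (TensorProduct.assoc ℂ Y X Y).symm.toLinearMap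
        ∘ₗ TensorProduct.map LinearMap.id R
        ∘ₗ (TensorProduct.assoc ℂ Y Y X).toLinearMap

/-- The twisted multiplication `m_R = (m_X ⊗ m_Y)∘(id_X ⊗ R ⊗ id_Y)` on `X ⊗ Y`. -/
def twistMul {X Y : Type*} [AddCommGroup X] [Module ℂ X] [AddCommGroup Y] [Module ℂ Y]
    (mX : X ⊗[ℂ] X →ₗ[ℂ] X) (mY : Y ⊗[ℂ] Y →ₗ[ℂ] Y) (R : Y ⊗[ℂ] X →ₗ[ℂ] X ⊗[ℂ] Y) :
    (X ⊗[ℂ] Y) ⊗[ℂ] (X ⊗[ℂ] Y) →ₗ[ℂ] X ⊗[ℂ] Y :=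
  TensorProduct.map mX mY
    ∘ₗ (TensorProduct.assoc ℂ X X (Y ⊗[ℂ] Y)).symm.toLinearMap
    ∘ₗ TensorProduct.map LinearMap.id
        ((TensorProduct.assoc ℂ X Y Y).toLinearMap
          ∘ₗ TensorProduct.map R LinearMap.id
          ∘ₗ (TensorProduct.assoc ℂ Y X Y).symm.toLinearMap)
    ∘ₗ (TensorProduct.assoc ℂ X Y (X ⊗[ℂ] Y)).toLinearMap

/-- The hexagon (compatibility) equation for `R₁ : B⊗A→A⊗B`, `R₂ : C⊗B→B⊗C`,
`R₃ : C⊗A→A⊗C`: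
`(id_A⊗R₂)∘(R₃⊗id_B)∘(id_C⊗R₁) = (R₁⊗id_C)∘(id_B⊗R₃)∘(R₂⊗id_A)`. -/
def Hexagon {A B C : Type*} [AddCommGroup A] [Module ℂ A] [AddCommGroup B] [Module ℂ B]
    [AddCommGroup C] [Module ℂ C]
    (R₁ : B ⊗[ℂ] A →ₗ[ℂ] A ⊗[ℂ] B) (R₂ : C ⊗[ℂ] B →ₗ[ℂ] B ⊗[ℂ] C)
    (R₃ : C ⊗[ℂ] A →ₗ[ℂ] A ⊗[ℂ] C) : Prop :=
  TensorProduct.map LinearMap.id R₂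
      ∘ₗ (TensorProduct.assoc ℂ A C B).toLinearMap
      ∘ₗ TensorProduct.map R₃ LinearMap.id
      ∘ₗ (TensorProduct.assoc ℂ C A B).symm.toLinearMap
      ∘ₗ TensorProduct.map LinearMap.id R₁
    = (TensorProduct.assoc ℂ A B C).toLinearMap
        ∘ₗ TensorProduct.map R₁ LinearMap.id
        ∘ₗ (TensorProduct.assoc ℂ B A C).symm.toLinearMap
        ∘ₗ TensorProduct.map LinearMap.id R₃
        ∘ₗ (TensorProduct.assoc ℂ B C A).toLinearMap
        ∘ₗ TensorProduct.map R₂ LinearMap.id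
        ∘ₗ (TensorProduct.assoc ℂ C B A).symm.toLinearMap

/-- The map `T₁ = (id_A⊗R₂)∘(R₃⊗id_B) : C ⊗ (A⊗B) → (A⊗B) ⊗ C`. -/
def Tone {A B C : Type*} [AddCommGroup A] [Module ℂ A] [AddCommGroup B] [Module ℂ B]
    [AddCommGroup C] [Module ℂ C]
    (R₂ : C ⊗[ℂ] B →ₗ[ℂ] B ⊗[ℂ] C) (R₃ : C ⊗[ℂ] A →ₗ[ℂ] A ⊗[ℂ] C) :
    C ⊗[ℂ] (A ⊗[ℂ] B) →ₗ[ℂ] (A ⊗[ℂ] B) ⊗[ℂ] C :=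
  (TensorProduct.assoc ℂ A B C).symm.toLinearMap
    ∘ₗ TensorProduct.map LinearMap.id R₂
    ∘ₗ (TensorProduct.assoc ℂ A C B).toLinearMap
    ∘ₗ TensorProduct.map R₃ LinearMap.id
    ∘ₗ (TensorProduct.assoc ℂ C A B).symm.toLinearMap

/-- The map `T₂ = (R₁⊗id_C)∘(id_B⊗R₃) : (B⊗C) ⊗ A → A ⊗ (B⊗C)`. -/
def Ttwo {A B C : Type*} [AddCommGroup A] [Module ℂ A] [AddCommGroup B] [Module ℂ B]
    [AddCommGroup C] [Module ℂ C]
    (R₁ : B ⊗[ℂ] A →ₗ[ℂ] A ⊗[ℂ] B) (R₃ : C ⊗[ℂ] A →ₗ[ℂ] A ⊗[ℂ] C) :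
    (B ⊗[ℂ] C) ⊗[ℂ] A →ₗ[ℂ] A ⊗[ℂ] (B ⊗[ℂ] C) :=
  (TensorProduct.assoc ℂ A B C).toLinearMap
    ∘ₗ TensorProduct.map R₁ LinearMap.id
    ∘ₗ (TensorProduct.assoc ℂ B A C).symm.toLinearMap
    ∘ₗ TensorProduct.map LinearMap.id R₃
    ∘ₗ (TensorProduct.assoc ℂ B C A).toLinearMap


private lemma flipL {A B C : Type*} [AddCommGroup A] [Module ℂ A] [AddCommGroup B] [Module ℂ B]
    [AddCommGroup C] [Module ℂ C] (z : A ⊗[ℂ] B) (c : C) :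
    (TensorProduct.map (LinearMap.id (R := ℂ) (M := A)) (TensorProduct.comm ℂ C B).toLinearMap)
      ((TensorProduct.assoc ℂ A C B).toLinearMap
        ((TensorProduct.map (TensorProduct.comm ℂ C A).toLinearMap (LinearMap.id (M := B)))
          ((TensorProduct.assoc ℂ C A B).symm.toLinearMap (c ⊗ₜ[ℂ] z))))
    = (TensorProduct.assoc ℂ A B C).toLinearMap (z ⊗ₜ[ℂ] c) := by
  induction z using TensorProduct.induction_on with
  | zero => simp
  | tmul a b => simp
  | add x y hx hy =>
      simp only [TensorProduct.tmul_add, TensorProduct.add_tmul, map_add, hx, hy]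

private lemma flipR {A B C : Type*} [AddCommGroup A] [Module ℂ A] [AddCommGroup B] [Module ℂ B]
    [AddCommGroup C] [Module ℂ C] (z : B ⊗[ℂ] C) (a : A) :
    (TensorProduct.assoc ℂ A B C).toLinearMap
      ((TensorProduct.map (TensorProduct.comm ℂ B A).toLinearMap (LinearMap.id (M := C)))
        ((TensorProduct.assoc ℂ B A C).symm.toLinearMap
          ((TensorProduct.map (LinearMap.id (R := ℂ) (M := B))
              (TensorProduct.comm ℂ C A).toLinearMap)
            ((TensorProduct.assoc ℂ B C A).toLinearMap (z ⊗ₜ[ℂ] a)))))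
    = a ⊗ₜ[ℂ] z := by
  induction z using TensorProduct.induction_on with
  | zero => simp
  | tmul b c => simp
  | add x y hx hy =>
      simp only [TensorProduct.tmul_add, TensorProduct.add_tmul, map_add, hx, hy]

private lemma flipM {A B C : Type*} [AddCommGroup A] [Module ℂ A] [AddCommGroup B] [Module ℂ B]
    [AddCommGroup C] [Module ℂ C] (z : A ⊗[ℂ] C) (b : B) :
    (TensorProduct.map (LinearMap.id (R := ℂ) (M := A)) (TensorProduct.comm ℂ C B).toLinearMap)
      ((TensorProduct.assoc ℂ A C B).toLinearMap (z ⊗ₜ[ℂ] b))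
    = (TensorProduct.assoc ℂ A B C).toLinearMap
        ((TensorProduct.map (TensorProduct.comm ℂ B A).toLinearMap (LinearMap.id (M := C)))
          ((TensorProduct.assoc ℂ B A C).symm.toLinearMap (b ⊗ₜ[ℂ] z))) := by
  induction z using TensorProduct.induction_on with
  | zero => simp
  | tmul a c => simp
  | add x y hx hy =>
      simp only [TensorProduct.tmul_add, TensorProduct.add_tmul, map_add, hx, hy]

/-- among three twisting maps `R₁ : B⊗A→A⊗B`, `R₂ : C⊗B→B⊗C`,
`R₃ : C⊗A→A⊗C`, if any two of them are the usual flips, then the three are compatible,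
i.e. they satisfy the hexagon equation. (In particular this applies to the maps
`R_{i,j}, R_{j,k}, R_{i,k}` whenever `j - i ≥ 2`, so that `R_{i,k}` and `R_{j,k}` are
flips.) -/
theorem statement18 {A B C : Type*} [Ring A] [Algebra ℂ A] [Ring B] [Algebra ℂ B]
    [Ring C] [Algebra ℂ C]
    (R₁ : B ⊗[ℂ] A →ₗ[ℂ] A ⊗[ℂ] B) (R₂ : C ⊗[ℂ] B →ₗ[ℂ] B ⊗[ℂ] C)
    (R₃ : C ⊗[ℂ] A →ₗ[ℂ] A ⊗[ℂ] C)
    (h11 : TwistCond1 (LinearMap.mul' ℂ A) R₁) (h12 : TwistCond2 (LinearMap.mul' ℂ B) R₁)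
    (h21 : TwistCond1 (LinearMap.mul' ℂ B) R₂) (h22 : TwistCond2 (LinearMap.mul' ℂ C) R₂)
    (h31 : TwistCond1 (LinearMap.mul' ℂ A) R₃) (h32 : TwistCond2 (LinearMap.mul' ℂ C) R₃) :
    ((R₂ = (TensorProduct.comm ℂ C B).toLinearMap ∧
        R₃ = (TensorProduct.comm ℂ C A).toLinearMap) → Hexagon R₁ R₂ R₃) ∧
    ((R₁ = (TensorProduct.comm ℂ B A).toLinearMap ∧
        R₃ = (TensorProduct.comm ℂ C A).toLinearMap) → Hexagon R₁ R₂ R₃) ∧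
    ((R₁ = (TensorProduct.comm ℂ B A).toLinearMap ∧
        R₂ = (TensorProduct.comm ℂ C B).toLinearMap) → Hexagon R₁ R₂ R₃) := by
  refine ⟨?_, ?_, ?_⟩
  · rintro ⟨h2, h3⟩
    subst h2 h3
    unfold Hexagon
    apply TensorProduct.ext'
    intro c z
    induction z using TensorProduct.induction_on with
    | zero => simp only [TensorProduct.tmul_zero, map_zero]
    | tmul b a =>
        simp only [LinearMap.comp_apply, TensorProduct.map_tmul, LinearMap.id_apply,
          LinearEquiv.coe_toLinearMap, TensorProduct.assoc_symm_tmul, TensorProduct.comm_tmul,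
          TensorProduct.assoc_tmul]
        exact flipL (R₁ (b ⊗ₜ[ℂ] a)) c
    | add x y hx hy => simp only [TensorProduct.tmul_add, map_add, hx, hy]
  · rintro ⟨h1, h3⟩
    subst h1 h3
    unfold Hexagon
    apply TensorProduct.ext'
    intro c z
    induction z using TensorProduct.induction_on with
    | zero => simp only [TensorProduct.tmul_zero, map_zero]
    | tmul b a =>
        simp only [LinearMap.comp_apply, TensorProduct.map_tmul, LinearMap.id_apply,
          LinearEquiv.coe_toLinearMap, TensorProduct.assoc_symm_tmul, TensorProduct.comm_tmul,
          TensorProduct.assoc_tmul]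
        exact (flipR (R₂ (c ⊗ₜ[ℂ] b)) a).symm
    | add x y hx hy => simp only [TensorProduct.tmul_add, map_add, hx, hy]
  · rintro ⟨h1, h2⟩
    subst h1 h2
    unfold Hexagon
    apply TensorProduct.ext'
    intro c z
    induction z using TensorProduct.induction_on with
    | zero => simp only [TensorProduct.tmul_zero, map_zero]
    | tmul b a =>
        simp only [LinearMap.comp_apply, TensorProduct.map_tmul, LinearMap.id_apply,
          LinearEquiv.coe_toLinearMap, TensorProduct.assoc_symm_tmul, TensorProduct.comm_tmul,
          TensorProduct.assoc_tmul]
        exact flipM (R₃ (c ⊗ₜ[ℂ] a)) b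
    | add x y hx hy => simp only [TensorProduct.tmul_add, map_add, hx, hy]
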